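/- Feasible solutions satisfy the compact formulation constraints (Proposition 3): Let p be an incentive assignment with p_i ∈ P_i for every i ∈ V, and suppose the propagation closure satisfies |A(p)| ≥ ⌈α·n⌉. Then for every set X ⊆ V with |X| ≥ ⌊(1 − α)·n⌋ + 1 there exists a node i ∈ X with p_i ≥ p̃_i(X). -/

import Mathlib

open scoped Classical
open Finset

noncomputable section

/-- In-neighbors of `i` in the arc set `E`. -/
def Nbr {V : Type*} [Fintype V] (E : Finset (V × V)) (i : V) : Finset V :=
  Finset.univ.filter (fun j => (j, i) ∈ E)

/-- Propagation iterates of the linear (Γ = 1) GLCIP: `A_0 = ∅` and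
`A_{t+1} = {i : p i + Σ_{j ∈ A_t, (j,i) ∈ E} d j i ≥ h i}`. -/
def propIter {V : Type*} [Fintype V] (E : Finset (V × V)) (d : V → V → ℝ)
    (h : V → ℝ) (p : V → ℝ) : ℕ → Finset V
  | 0 => ∅
  | t + 1 => Finset.univ.filter
      (fun i => h i ≤ p i + ∑ j ∈ (propIter E d h p t).filter (fun j => (j, i) ∈ E), d j i)

/-- Propagation closure `A(p) = A_n` with `n = |V|`. -/
def propClosure {V : Type*} [Fintype V] (E : Finset (V × V)) (d : V → V → ℝ)
    (h : V → ℝ) (p : V → ℝ) : Finset V :=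
  propIter E d h p (Fintype.card V)

/-- Proposition 3: any feasible integer solution satisfies the compact formulation
constraints. -/
theorem feasible_satisfies_cf_constraints {V : Type*} [Fintype V]
    (E : Finset (V × V)) (d : V → V → ℝ) (h : V → ℝ) (P : V → Finset ℝ) (α : ℝ)
    (hE : ∀ a ∈ E, a.1 ≠ a.2)
    (hd : ∀ a ∈ E, 0 < d a.1 a.2)
    (hh : ∀ i, 0 < h i)
    (hP0 : ∀ i, (0 : ℝ) ∈ P i)
    (hPnn : ∀ i, ∀ q ∈ P i, 0 ≤ q)
    (hα0 : 0 ≤ α) (hα1 : α ≤ 1)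
    (hact : ∀ i, ∃ q ∈ P i, h i ≤ q)
    (pt : Finset V → V → ℝ)
    (hpt : ∀ (X : Finset V), ∀ i ∈ X,
      IsLeast {q : ℝ | q ∈ P i ∧ h i ≤ q + ∑ j ∈ Nbr E i \ X, d j i} (pt X i))
    (p : V → ℝ) (hp : ∀ i, p i ∈ P i)
    (hcov : ((propClosure E d h p).card : ℤ) ≥ ⌈α * (Fintype.card V : ℝ)⌉) :
    ∀ X : Finset V,
      (X.card : ℤ) ≥ ⌊(1 - α) * (Fintype.card V : ℝ)⌋ + 1 →
      ∃ i ∈ X, pt X i ≤ p i := by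
  intro X hX
  -- X meets the closure
  have hint : (X ∩ propClosure E d h p).Nonempty := by
    rw [Finset.nonempty_iff_ne_empty]
    intro hemp
    have hdisj : Disjoint X (propClosure E d h p) :=
      Finset.disjoint_iff_inter_eq_empty.mpr hemp
    have hcard : X.card + (propClosure E d h p).card ≤ Fintype.card V := by
      rw [← Finset.card_union_of_disjoint hdisj]
      exact Finset.card_le_univ _
    have h1 : (⌊(1 - α) * (Fintype.card V : ℝ)⌋ + 1) + ⌈α * (Fintype.card V : ℝ)⌉
        ≤ (X.card : ℤ) + (propClosure E d h p).card := add_le_add hX hcov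
    have h2 : (Fintype.card V : ℤ) < ⌊(1 - α) * (Fintype.card V : ℝ)⌋ + 1 +
        ⌈α * (Fintype.card V : ℝ)⌉ := by
      have hfl : (Fintype.card V : ℤ) ≤ ⌊(1 - α) * (Fintype.card V : ℝ)⌋ +
          ⌈α * (Fintype.card V : ℝ)⌉ := by
        have : ((Fintype.card V : ℤ) : ℝ) ≤
            (1 - α) * (Fintype.card V : ℝ) + ⌈α * (Fintype.card V : ℝ)⌉ := by
          have := Int.le_ceil (α * (Fintype.card V : ℝ))
          push_cast
          nlinarith
        have := Int.le_floor.mpr this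
        rwa [Int.floor_add_intCast] at this
      omega
    have h3 : (X.card : ℤ) + (propClosure E d h p).card ≤ (Fintype.card V : ℤ) := by
      exact_mod_cast hcard
    omega
  -- monotonicity of propIter
  have hmono : ∀ t, propIter E d h p t ⊆ propIter E d h p (t + 1) := by
    intro t
    induction t with
    | zero => simp [propIter]
    | succ s ih =>
      intro i hi
      simp only [propIter, Finset.mem_filter, Finset.mem_univ, true_and] at hi ⊢
      refine Finset.mem_filter.mpr ⟨Finset.mem_univ _, hi.trans (add_le_add_right ?_ _)⟩
      apply Finset.sum_le_sum_of_subset_of_nonneg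
      · exact Finset.filter_subset_filter _ ih
      · intro j hj _
        exact le_of_lt (hd (j, i) (Finset.mem_filter.mp hj).2)
  -- earliest time X is hit
  have hex : ∃ t, (X ∩ propIter E d h p t).Nonempty := ⟨Fintype.card V, hint⟩
  classical
  let t := Nat.find hex
  have ht : (X ∩ propIter E d h p t).Nonempty := Nat.find_spec hex
  have ht0 : t ≠ 0 := by
    intro h0
    have := ht
    rw [h0] at this
    simp [propIter] at this
  obtain ⟨s, hs⟩ : ∃ s, t = s + 1 := ⟨t - 1, (Nat.succ_pred_eq_of_ne_zero ht0).symm⟩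
  have hprev : ¬ (X ∩ propIter E d h p s).Nonempty := Nat.find_min hex (by omega)
  obtain ⟨i, hi⟩ := ht
  rw [hs] at hi
  obtain ⟨hiX, hiA⟩ := Finset.mem_inter.mp hi
  refine ⟨i, hiX, ?_⟩
  simp only [propIter, Finset.mem_filter, Finset.mem_univ, true_and] at hiA
  have hsub : (propIter E d h p s).filter (fun j => (j, i) ∈ E) ⊆ Nbr E i \ X := by
    intro j hj
    obtain ⟨hjA, hjE⟩ := Finset.mem_filter.mp hj
    refine Finset.mem_sdiff.mpr ⟨Finset.mem_filter.mpr ⟨Finset.mem_univ _, hjE⟩, ?_⟩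
    intro hjX
    exact hprev ⟨j, Finset.mem_inter.mpr ⟨hjX, hjA⟩⟩
  have hle : h i ≤ p i + ∑ j ∈ Nbr E i \ X, d j i := by
    refine hiA.trans (add_le_add_right ?_ _)
    apply Finset.sum_le_sum_of_subset_of_nonneg hsub
    intro j hj _
    have : (j, i) ∈ E := (Finset.mem_filter.mp (Finset.mem_sdiff.mp hj).1).2
    exact le_of_lt (hd (j, i) this)
  exact (hpt X i hiX).2 ⟨hp i, hle⟩
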